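/- Let C be an M × M Hermitian positive definite complex matrix and let u, v ∈ ℂ^M. Then C + u·uᴴ + v·vᴴ is invertible, the real number D := (1 + uᴴC⁻¹u)(1 + vᴴC⁻¹v) − |uᴴC⁻¹v|² is strictly positive, and uᴴ(C + u·uᴴ + v·vᴴ)⁻¹v = uᴴC⁻¹v / D. -/

import Mathlib

open Matrix
open scoped ComplexOrder

private lemma vmv_mulVec {M : ℕ} (w y x : Fin M → ℂ) :
    vecMulVec w y *ᵥ x = (y ⬝ᵥ x) • w := by
  ext i
  simp [vecMulVec, mulVec, dotProduct, Finset.mul_sum, mul_comm, mul_assoc, mul_left_comm]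

private lemma vmv_posSemidef {M : ℕ} (w : Fin M → ℂ) : (vecMulVec w (star w)).PosSemidef := by
  rw [vecMulVec_eq Unit, ← conjTranspose_replicateCol]
  exact posSemidef_self_mul_conjTranspose _

/-- Double rank-one quadratic-form identity: for `C` Hermitian positive definite and
`u, v ∈ ℂ^M`, the matrix `C + u uᴴ + v vᴴ` is invertible, the quantity
`D = (1 + uᴴ C⁻¹ u)(1 + vᴴ C⁻¹ v) − |uᴴ C⁻¹ v|²` is a strictly positive real number,
and `uᴴ (C + u uᴴ + v vᴴ)⁻¹ v = uᴴ C⁻¹ v / D`. -/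
theorem stmt_10 (M : ℕ) (C : Matrix (Fin M) (Fin M) ℂ) (hC : C.PosDef)
    (u v : Fin M → ℂ) :
    IsUnit (C + vecMulVec u (star u) + vecMulVec v (star v)).det ∧
    ((1 + star u ⬝ᵥ C⁻¹ *ᵥ u) * (1 + star v ⬝ᵥ C⁻¹ *ᵥ v)
        - (‖star u ⬝ᵥ C⁻¹ *ᵥ v‖ : ℂ) ^ 2).im = 0 ∧
    0 < ((1 + star u ⬝ᵥ C⁻¹ *ᵥ u) * (1 + star v ⬝ᵥ C⁻¹ *ᵥ v)
        - (‖star u ⬝ᵥ C⁻¹ *ᵥ v‖ : ℂ) ^ 2).re ∧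
    star u ⬝ᵥ (C + vecMulVec u (star u) + vecMulVec v (star v))⁻¹ *ᵥ v
      = (star u ⬝ᵥ C⁻¹ *ᵥ v) /
        ((1 + star u ⬝ᵥ C⁻¹ *ᵥ u) * (1 + star v ⬝ᵥ C⁻¹ *ᵥ v)
          - (‖star u ⬝ᵥ C⁻¹ *ᵥ v‖ : ℂ) ^ 2) := by
  have hCi := hC.inv
  set a := star u ⬝ᵥ C⁻¹ *ᵥ u with ha_def
  set b := star u ⬝ᵥ C⁻¹ *ᵥ v with hb_def
  set c := star v ⬝ᵥ C⁻¹ *ᵥ v with hc_def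
  set D := (1 + a) * (1 + c) - (‖b‖ : ℂ) ^ 2 with hD_def
  -- conjugation symmetry of the quadratic form of the Hermitian matrix `C⁻¹`
  have hconj : ∀ x y : Fin M → ℂ,
      starRingEnd ℂ (star x ⬝ᵥ C⁻¹ *ᵥ y) = star y ⬝ᵥ C⁻¹ *ᵥ x := fun x y => by
    rw [starRingEnd_apply, star_dotProduct, star_star, star_mulVec, dotProduct_mulVec,
      hCi.isHermitian.eq]
  have ha_im : a.im = 0 := by
    have := hconj u u
    rw [← ha_def] at this
    simpa [Complex.ext_iff, neg_eq_iff_add_eq_zero] using congrArg Complex.im this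
  have hc_im : c.im = 0 := by
    have := hconj v v
    rw [← hc_def] at this
    simpa [Complex.ext_iff, neg_eq_iff_add_eq_zero] using congrArg Complex.im this
  have ha_nonneg : 0 ≤ a.re := hCi.posSemidef.re_dotProduct_nonneg u
  have hc_nonneg : 0 ≤ c.re := hCi.posSemidef.re_dotProduct_nonneg v
  -- Cauchy–Schwarz inequality in the inner product induced by `C⁻¹`
  have hcs : ‖b‖ ^ 2 ≤ a.re * c.re := by
    let core : PreInnerProductSpace.Core ℂ (Fin M → ℂ) :=
      { inner := fun x y => star x ⬝ᵥ C⁻¹ *ᵥ y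
        conj_inner_symm := fun x y => hconj y x
        re_inner_nonneg := fun x => hCi.posSemidef.re_dotProduct_nonneg x
        add_left := by simp only [star_add, add_dotProduct, forall_const, implies_true]
        smul_left := fun x y r => by
          rw [← smul_eq_mul, ← smul_dotProduct, starRingEnd_apply, ← star_smul] }
    have cs : ‖star u ⬝ᵥ C⁻¹ *ᵥ v‖ * ‖star v ⬝ᵥ C⁻¹ *ᵥ u‖
        ≤ (star u ⬝ᵥ C⁻¹ *ᵥ u).re * (star v ⬝ᵥ C⁻¹ *ᵥ v).re :=
      @InnerProductSpace.Core.inner_mul_inner_self_le ℂ (Fin M → ℂ) _ _ _ core u v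
    have hvb : star v ⬝ᵥ C⁻¹ *ᵥ u = starRingEnd ℂ b := by rw [← hconj u v, hb_def]
    rw [← ha_def, ← hb_def, ← hc_def, hvb] at cs
    simpa [sq] using cs
  -- `D` is real and positive
  have hD_im : D.im = 0 := by
    simp [hD_def, Complex.add_im, Complex.mul_im, ha_im, hc_im, ← Complex.ofReal_pow]
  have hD_re : 0 < D.re := by
    have : D.re = (1 + a.re) * (1 + c.re) - ‖b‖ ^ 2 := by
      simp [hD_def, Complex.add_re, Complex.mul_re, ha_im, hc_im, ← Complex.ofReal_pow]
    rw [this]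
    nlinarith
  have hD_ne : D ≠ 0 := fun h => by simp [h] at hD_re
  -- positive definiteness of `A = C + uuᴴ + vvᴴ`
  set A := C + vecMulVec u (star u) + vecMulVec v (star v) with hA_def
  have hA : A.PosDef := (hC.add_posSemidef (vmv_posSemidef u)).add_posSemidef (vmv_posSemidef v)
  have hAdet : IsUnit A.det := (Matrix.isUnit_iff_isUnit_det A).mp hA.isUnit
  have hCdet : IsUnit C.det := (Matrix.isUnit_iff_isUnit_det C).mp hC.isUnit
  refine ⟨hAdet, hD_im, hD_re, ?_⟩
  have hbb : (‖b‖ : ℂ) ^ 2 = b * starRingEnd ℂ b := by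
    rw [← Complex.ofReal_pow, Complex.sq_norm, Complex.mul_conj]
  have hvb : star v ⬝ᵥ C⁻¹ *ᵥ u = starRingEnd ℂ b := by rw [← hconj u v, hb_def]
  -- the explicit solution of `A x = v`
  set x := (-b / D) • (C⁻¹ *ᵥ u) + ((1 + a) / D) • (C⁻¹ *ᵥ v) with hx_def
  have e1 : -b / D + (-b / D * a + (1 + a) / D * b) = 0 := by
    calc -b / D + (-b / D * a + (1 + a) / D * b)
        = (-b + (-(b * a) + (1 + a) * b)) / D := by ring
      _ = 0 := by rw [show -b + (-(b * a) + (1 + a) * b) = 0 from by ring, zero_div]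
  have e2 : (1 + a) / D + (-b / D * starRingEnd ℂ b + (1 + a) / D * c) = 1 := by
    have key : (1 + a) + (-(b * starRingEnd ℂ b) + (1 + a) * c) = D := by
      rw [hD_def, hbb]; ring
    calc (1 + a) / D + (-b / D * starRingEnd ℂ b + (1 + a) / D * c)
        = ((1 + a) + (-(b * starRingEnd ℂ b) + (1 + a) * c)) / D := by ring
      _ = D / D := by rw [key]
      _ = 1 := div_self hD_ne
  have hAx : A *ᵥ x = v := by
    have h1 : A *ᵥ x = (-b / D + (-b / D * a + (1 + a) / D * b)) • u
        + ((1 + a) / D + (-b / D * starRingEnd ℂ b + (1 + a) / D * c)) • v := by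
      rw [hA_def, hx_def, add_mulVec, add_mulVec, mulVec_add, mulVec_smul, mulVec_smul,
        mulVec_mulVec, mulVec_mulVec, Matrix.mul_nonsing_inv C hCdet, one_mulVec, one_mulVec,
        vmv_mulVec, vmv_mulVec, dotProduct_add, dotProduct_add, dotProduct_smul,
        dotProduct_smul, dotProduct_smul, dotProduct_smul, ← ha_def, ← hb_def, ← hc_def, hvb]
      simp only [smul_eq_mul]
      module
    rw [h1, e1, e2, zero_smul, zero_add, one_smul]
  have hxv : A⁻¹ *ᵥ v = x := by
    rw [← hAx, mulVec_mulVec, Matrix.nonsing_inv_mul A hAdet, one_mulVec]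
  rw [hxv, hx_def, dotProduct_add, dotProduct_smul, dotProduct_smul, ← ha_def, ← hb_def,
    smul_eq_mul, smul_eq_mul, div_mul_eq_mul_div, div_mul_eq_mul_div, ← add_div]
  congr 1
  ring
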